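/- Let T be a positive bounded operator on a Hilbert space H such that T^s is trace class for every s > 1. If the limit l = lim_{ε→0⁺} ε·Tr(T^{1+ε}) exists, then the singular values λ_k(T) satisfy (1/log N)·∑_{k=1}^{N} λ_k(T) → l as N → ∞ (i.e., T is Dixmier traceable with Dixmier trace l). -/

import Mathlib

open Filter
open Real Polynomial



section karamata

variable (lam : ℕ → ℝ) (l : ℝ)

/-- scaled limit -/
lemma dx_scale (hlim : Tendsto (fun ε : ℝ => ε * ∑' k, lam k ^ (1 + ε))
      (nhdsWithin 0 (Set.Ioi 0)) (nhds l)) (c : ℝ) (hc : 0 < c) :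
    Tendsto (fun ε : ℝ => ε * ∑' k, lam k ^ (1 + c * ε))
      (nhdsWithin 0 (Set.Ioi 0)) (nhds (l / c)) := by
  have h1 : Tendsto (fun ε : ℝ => c * ε) (nhdsWithin 0 (Set.Ioi 0))
      (nhdsWithin 0 (Set.Ioi 0)) := by
    apply tendsto_nhdsWithin_iff.mpr
    constructor
    · have : Tendsto (fun ε : ℝ => c * ε) (nhds 0) (nhds 0) := by
        simpa using (continuous_mul_left c).tendsto (0:ℝ)
      exact this.mono_left nhdsWithin_le_nhds
    · filter_upwards [self_mem_nhdsWithin] with x hx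
      exact Set.mem_Ioi.mpr (mul_pos hc hx)
  have h2 := (hlim.comp h1).const_mul (1/c)
  have : (fun ε : ℝ => 1/c * ((c * ε) * ∑' k, lam k ^ (1 + c * ε)))
      = fun ε : ℝ => ε * ∑' k, lam k ^ (1 + c * ε) := by
    funext ε; field_simp
  have h3 : Tendsto (fun ε : ℝ => 1/c * ((c * ε) * ∑' k, lam k ^ (1 + c * ε)))
      (nhdsWithin 0 (Set.Ioi 0)) (nhds (1/c * l)) := h2
  rw [this] at h3
  convert h3 using 2
  field_simp

end karamata



variable {lam : ℕ → ℝ} {l : ℝ}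

lemma dx_mono (hnn : ∀ k, 0 ≤ lam k)
    (hlim : Tendsto (fun ε : ℝ => ε * ∑' k, lam k ^ (1 + ε))
      (nhdsWithin 0 (Set.Ioi 0)) (nhds l)) (m : ℕ)
    (hsc : ∀ c : ℝ, 0 < c → Tendsto (fun ε : ℝ => ε * ∑' k, lam k ^ (1 + c * ε))
      (nhdsWithin 0 (Set.Ioi 0)) (nhds (l / c))) :
    Tendsto (fun ε : ℝ => ε * ∑' k, lam k ^ (1 + ε) * (lam k ^ ε) ^ m)
      (nhdsWithin 0 (Set.Ioi 0)) (nhds (l / (m + 1))) := by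
  have key := hsc ((m : ℝ) + 1) (by positivity)
  apply key.congr'
  filter_upwards [self_mem_nhdsWithin] with ε (hε : 0 < ε)
  congr 1
  apply tsum_congr
  intro k
  rcases eq_or_lt_of_le (hnn k) with h0 | hpos
  · rw [← h0]
    rw [Real.zero_rpow (by positivity), Real.zero_rpow (by positivity),
      Real.zero_rpow (ne_of_gt hε)]
    rcases Nat.eq_zero_or_pos m with hm | hm
    · simp [hm]
    · rw [zero_pow (Nat.pos_iff_ne_zero.mp hm)]; ring
  · rw [← Real.rpow_natCast (lam k ^ ε) m, ← Real.rpow_mul (le_of_lt hpos),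
      ← Real.rpow_add hpos]
    congr 1
    ring



variable {lam : ℕ → ℝ} {l : ℝ}

lemma dx_rw (hnn : ∀ k, 0 ≤ lam k) {ε : ℝ} (hε : 0 < ε) (k : ℕ) (i : ℕ) :
    lam k ^ (1 + ε) * (lam k ^ ε) ^ i = lam k ^ (1 + (i + 1 : ℝ) * ε) := by
  rcases eq_or_lt_of_le (hnn k) with h0 | hpos
  · rw [← h0, Real.zero_rpow (show (1:ℝ) + ε ≠ 0 by positivity),
      Real.zero_rpow (show 1 + ((i:ℝ) + 1) * ε ≠ 0 by positivity)]
    ring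
  · rw [← Real.rpow_natCast (lam k ^ ε) i, ← Real.rpow_mul (le_of_lt hpos),
      ← Real.rpow_add hpos]
    congr 1
    ring

lemma dx_mem (hanti : Antitone lam) (hnn : ∀ k, 0 ≤ lam k) {ε : ℝ} (hε : 0 < ε)
    (hε1 : ε ≤ 1) (k : ℕ) : lam k ^ ε ∈ Set.Icc (0:ℝ) (max 1 (lam 0)) := by
  constructor
  · exact Real.rpow_nonneg (hnn k) ε
  · rcases le_or_gt (lam k) 1 with h | h
    · exact le_trans (Real.rpow_le_one (hnn k) h (le_of_lt hε)) (le_max_left _ _)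
    · calc lam k ^ ε ≤ lam k ^ (1:ℝ) :=
            Real.rpow_le_rpow_of_exponent_le (le_of_lt h) hε1
        _ = lam k := Real.rpow_one _
        _ ≤ max 1 (lam 0) := le_trans (hanti (Nat.zero_le k)) (le_max_right _ _)

lemma dx_summable (hnn : ∀ k, 0 ≤ lam k)
    (htrace : ∀ s : ℝ, 1 < s → Summable fun k => lam k ^ s)
    {ε : ℝ} (hε : 0 < ε) {f : ℝ → ℝ} {M : ℝ}
    (hM : ∀ k, |f (lam k ^ ε)| ≤ M) :
    Summable fun k => lam k ^ (1 + ε) * f (lam k ^ ε) := by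
  apply Summable.of_abs
  refine Summable.of_nonneg_of_le (fun k => abs_nonneg _) (fun k => ?_)
    ((htrace (1 + ε) (by linarith)).mul_left M)
  rw [abs_mul, abs_of_nonneg (Real.rpow_nonneg (hnn k) _), mul_comm]
  exact mul_le_mul_of_nonneg_right (hM k) (Real.rpow_nonneg (hnn k) _)



variable {lam : ℕ → ℝ} {l : ℝ}

lemma dx_poly (hnn : ∀ k, 0 ≤ lam k)
    (htrace : ∀ s : ℝ, 1 < s → Summable fun k => lam k ^ s)
    (hrw : ∀ {ε : ℝ}, 0 < ε → ∀ k i : ℕ,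
      lam k ^ (1 + ε) * (lam k ^ ε) ^ i = lam k ^ (1 + (i + 1 : ℝ) * ε))
    (hmono : ∀ m : ℕ, Tendsto (fun ε : ℝ => ε * ∑' k, lam k ^ (1 + ε) * (lam k ^ ε) ^ m)
      (nhdsWithin 0 (Set.Ioi 0)) (nhds (l / (m + 1))))
    (p : Polynomial ℝ) :
    Tendsto (fun ε : ℝ => ε * ∑' k, lam k ^ (1 + ε) * p.eval (lam k ^ ε))
      (nhdsWithin 0 (Set.Ioi 0)) (nhds (l * ∫ x in (0:ℝ)..1, p.eval x)) := by
  set n := p.natDegree + 1 with hn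
  -- rewrite the function
  have hfun : ∀ ε : ℝ, 0 < ε →
      ε * ∑' k, lam k ^ (1 + ε) * p.eval (lam k ^ ε)
      = ∑ i ∈ Finset.range n, p.coeff i *
          (ε * ∑' k, lam k ^ (1 + ε) * (lam k ^ ε) ^ i) := by
    intro ε hε
    have h1 : ∀ k, lam k ^ (1 + ε) * p.eval (lam k ^ ε)
        = ∑ i ∈ Finset.range n, p.coeff i * (lam k ^ (1 + ε) * (lam k ^ ε) ^ i) := by
      intro k
      rw [eval_eq_sum_range, Finset.mul_sum]
      apply Finset.sum_congr rfl
      intro i _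
      ring
    rw [tsum_congr h1, Summable.tsum_finsetSum (f := fun i k => p.coeff i * (lam k ^ (1 + ε) * (lam k ^ ε) ^ i))]
    · rw [Finset.mul_sum]
      apply Finset.sum_congr rfl
      intro i _
      rw [tsum_mul_left]
      ring
    · intro i _
      apply Summable.mul_left
      have : (fun k => lam k ^ (1 + ε) * (lam k ^ ε) ^ i)
          = fun k => lam k ^ (1 + ((i:ℝ) + 1) * ε) := by
        funext k; exact hrw hε k i
      rw [this]
      exact htrace _ (by nlinarith [Nat.cast_nonneg (α := ℝ) i])
  -- limit of the finite sum
  have hlim2 : Tendsto (fun ε : ℝ => ∑ i ∈ Finset.range n, p.coeff i *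
      (ε * ∑' k, lam k ^ (1 + ε) * (lam k ^ ε) ^ i))
      (nhdsWithin 0 (Set.Ioi 0))
      (nhds (∑ i ∈ Finset.range n, p.coeff i * (l / (i + 1)))) := by
    apply tendsto_finset_sum
    intro i _
    exact (hmono i).const_mul _
  have heq : (∑ i ∈ Finset.range n, p.coeff i * (l / (i + 1)))
      = l * ∫ x in (0:ℝ)..1, p.eval x := by
    have : ∀ x : ℝ, p.eval x = ∑ i ∈ Finset.range n, p.coeff i * x ^ i := by
      intro x; rw [eval_eq_sum_range]
    rw [intervalIntegral.integral_congr (g := fun x => ∑ i ∈ Finset.range n, p.coeff i * x ^ i)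
      (fun x _ => this x)]
    rw [intervalIntegral.integral_finset_sum]
    · rw [Finset.mul_sum]
      apply Finset.sum_congr rfl
      intro i _
      rw [intervalIntegral.integral_const_mul, integral_pow]
      simp
      ring
    · intro i _
      exact (continuous_const.mul (continuous_pow i)).intervalIntegrable _ _
  rw [← heq]
  apply hlim2.congr'
  filter_upwards [self_mem_nhdsWithin] with ε (hε : 0 < ε)
  exact (hfun ε hε).symm



variable {lam : ℕ → ℝ} {l : ℝ}

lemma dx_cont (hanti : Antitone lam) (hnn : ∀ k, 0 ≤ lam k)
    (htrace : ∀ s : ℝ, 1 < s → Summable fun k => lam k ^ s)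
    (hl : 0 ≤ l)
    (hPhi : ∀ᶠ ε in nhdsWithin (0:ℝ) (Set.Ioi 0), ε * ∑' k, lam k ^ (1 + ε) ≤ l + 1)
    (hpoly : ∀ p : Polynomial ℝ,
      Tendsto (fun ε : ℝ => ε * ∑' k, lam k ^ (1 + ε) * p.eval (lam k ^ ε))
        (nhdsWithin 0 (Set.Ioi 0)) (nhds (l * ∫ x in (0:ℝ)..1, p.eval x)))
    (f : ℝ → ℝ) (hf : Continuous f) :
    Tendsto (fun ε : ℝ => ε * ∑' k, lam k ^ (1 + ε) * f (lam k ^ ε))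
      (nhdsWithin 0 (Set.Ioi 0)) (nhds (l * ∫ x in (0:ℝ)..1, f x)) := by
  set B := max 1 (lam 0) with hB
  have hB1 : (1:ℝ) ≤ B := le_max_left _ _
  rw [Metric.tendsto_nhds]
  intro η hη
  set η₁ := η / (2 * l + 4) with hη₁
  have hη₁pos : 0 < η₁ := by positivity
  obtain ⟨p, hp⟩ := exists_polynomial_near_of_continuousOn 0 B f hf.continuousOn η₁ hη₁pos
  -- bound for f on Icc 0 B
  obtain ⟨Mf, hMf⟩ := (isCompact_Icc (a := (0:ℝ)) (b := B)).exists_bound_of_continuousOn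
    hf.continuousOn
  obtain ⟨Mp, hMp⟩ := (isCompact_Icc (a := (0:ℝ)) (b := B)).exists_bound_of_continuousOn
    (p.continuous.continuousOn (s := Set.Icc 0 B))
  have hmem : ∀ {ε : ℝ}, 0 < ε → ε ≤ 1 → ∀ k, lam k ^ ε ∈ Set.Icc (0:ℝ) B := by
    intro ε hε hε1 k
    constructor
    · exact Real.rpow_nonneg (hnn k) ε
    · rcases le_or_gt (lam k) 1 with h | h
      · exact le_trans (Real.rpow_le_one (hnn k) h (le_of_lt hε)) (le_max_left _ _)
      · calc lam k ^ ε ≤ lam k ^ (1:ℝ) :=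
              Real.rpow_le_rpow_of_exponent_le (le_of_lt h) hε1
          _ = lam k := Real.rpow_one _
          _ ≤ B := le_trans (hanti (Nat.zero_le k)) (le_max_right _ _)
  have hploc := Metric.tendsto_nhds.mp (hpoly p) η₁ hη₁pos
  filter_upwards [hPhi, hploc, Ioc_mem_nhdsGT_of_mem (Set.left_mem_Ico.mpr zero_lt_one)]
    with ε h1 h2 h3
  obtain ⟨hε, hε1⟩ := h3
  have summab : ∀ (g : ℝ → ℝ) (M : ℝ), (∀ x ∈ Set.Icc (0:ℝ) B, ‖g x‖ ≤ M) →
      Summable fun k => lam k ^ (1 + ε) * g (lam k ^ ε) := by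
    intro g M hM
    apply Summable.of_abs
    refine Summable.of_nonneg_of_le (fun k => abs_nonneg _) (fun k => ?_)
      ((htrace (1 + ε) (by linarith)).mul_left M)
    rw [abs_mul, abs_of_nonneg (Real.rpow_nonneg (hnn k) _), mul_comm]
    refine mul_le_mul_of_nonneg_right ?_ (Real.rpow_nonneg (hnn k) _)
    have := hM _ (hmem hε hε1 k)
    rwa [Real.norm_eq_abs] at this
  have Sf : Summable fun k => lam k ^ (1 + ε) * f (lam k ^ ε) := summab f Mf hMf
  have Sp : Summable fun k => lam k ^ (1 + ε) * p.eval (lam k ^ ε) := by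
    exact summab (fun x => p.eval x) Mp hMp
  -- difference bound
  have hdiff : |(ε * ∑' k, lam k ^ (1 + ε) * f (lam k ^ ε))
      - ε * ∑' k, lam k ^ (1 + ε) * p.eval (lam k ^ ε)| ≤ η₁ * (l + 1) := by
    rw [← mul_sub, ← Summable.tsum_sub Sf Sp, abs_mul, abs_of_pos hε]
    have hterm : ∀ k, |lam k ^ (1 + ε) * f (lam k ^ ε) - lam k ^ (1 + ε) * p.eval (lam k ^ ε)|
        ≤ η₁ * lam k ^ (1 + ε) := by
      intro k
      rw [← mul_sub, abs_mul, abs_of_nonneg (Real.rpow_nonneg (hnn k) _), mul_comm]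
      refine mul_le_mul_of_nonneg_right ?_ (Real.rpow_nonneg (hnn k) _)
      have := hp _ (hmem hε hε1 k)
      rw [abs_sub_comm] at this
      exact le_of_lt this
    have habs : |∑' k, (lam k ^ (1 + ε) * f (lam k ^ ε) - lam k ^ (1 + ε) * p.eval (lam k ^ ε))|
        ≤ ∑' k, η₁ * lam k ^ (1 + ε) := by
      have hs : Summable fun k => η₁ * lam k ^ (1 + ε) :=
        (htrace (1 + ε) (by linarith)).mul_left η₁
      calc |∑' k, (lam k ^ (1 + ε) * f (lam k ^ ε) - lam k ^ (1 + ε) * p.eval (lam k ^ ε))|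
          ≤ ∑' k, |lam k ^ (1 + ε) * f (lam k ^ ε) - lam k ^ (1 + ε) * p.eval (lam k ^ ε)| := by
            have := norm_tsum_le_tsum_norm (f := fun k =>
              lam k ^ (1 + ε) * f (lam k ^ ε) - lam k ^ (1 + ε) * p.eval (lam k ^ ε))
              ((Sf.sub Sp).abs)
            simpa [Real.norm_eq_abs] using this
        _ ≤ ∑' k, η₁ * lam k ^ (1 + ε) := by
            apply Summable.tsum_le_tsum hterm _ hs
            apply Summable.abs (Sf.sub Sp)
    calc ε * |∑' k, (lam k ^ (1 + ε) * f (lam k ^ ε) - lam k ^ (1 + ε) * p.eval (lam k ^ ε))|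
        ≤ ε * ∑' k, η₁ * lam k ^ (1 + ε) :=
          mul_le_mul_of_nonneg_left habs (le_of_lt hε)
      _ = η₁ * (ε * ∑' k, lam k ^ (1 + ε)) := by rw [tsum_mul_left]; ring
      _ ≤ η₁ * (l + 1) := mul_le_mul_of_nonneg_left h1 (le_of_lt hη₁pos)
  -- integral bound
  have hint : |(l * ∫ x in (0:ℝ)..1, p.eval x) - l * ∫ x in (0:ℝ)..1, f x| ≤ l * η₁ := by
    rw [← mul_sub, abs_mul, abs_of_nonneg hl]
    refine mul_le_mul_of_nonneg_left ?_ hl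
    rw [← intervalIntegral.integral_sub ((p.continuous.intervalIntegrable _ _))
      (hf.intervalIntegrable _ _)]
    have := intervalIntegral.norm_integral_le_of_norm_le_const
      (C := η₁) (f := fun x => p.eval x - f x) (a := 0) (b := 1) ?_
    · rw [Real.norm_eq_abs] at this
      simpa using this
    · intro x hx
      rw [Set.uIoc_of_le (by norm_num : (0:ℝ) ≤ 1)] at hx
      have hxm : x ∈ Set.Icc (0:ℝ) B := ⟨le_of_lt hx.1, le_trans hx.2 hB1⟩
      rw [Real.norm_eq_abs]
      exact le_of_lt (hp x hxm)
  -- combine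
  rw [Real.dist_eq] at h2 ⊢
  have key : |(ε * ∑' k, lam k ^ (1 + ε) * f (lam k ^ ε)) - l * ∫ x in (0:ℝ)..1, f x|
      ≤ η₁ * (l + 1) + η₁ + l * η₁ := by
    have t1 := abs_sub_le (ε * ∑' k, lam k ^ (1 + ε) * f (lam k ^ ε))
      (ε * ∑' k, lam k ^ (1 + ε) * p.eval (lam k ^ ε)) (l * ∫ x in (0:ℝ)..1, f x)
    have t2 := abs_sub_le (ε * ∑' k, lam k ^ (1 + ε) * p.eval (lam k ^ ε))
      (l * ∫ x in (0:ℝ)..1, p.eval x) (l * ∫ x in (0:ℝ)..1, f x)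
    linarith [le_of_lt h2]
  have h2l : (0:ℝ) < 2 * l + 4 := by linarith
  calc |(ε * ∑' k, lam k ^ (1 + ε) * f (lam k ^ ε)) - l * ∫ x in (0:ℝ)..1, f x|
      ≤ η₁ * (l + 1) + η₁ + l * η₁ := key
    _ = η * ((2 * l + 2) / (2 * l + 4)) := by rw [hη₁]; field_simp; ring
    _ < η * 1 := by
        refine mul_lt_mul_of_pos_left ?_ hη
        rw [div_lt_one h2l]; linarith
    _ = η := mul_one η



lemma dx_c_facts : (0:ℝ) < Real.exp (-1) ∧ Real.exp (-1) ≤ 3/4 ∧ (1:ℝ)/4 ≤ Real.exp (-1)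
    ∧ Real.exp (-1) * Real.exp 1 = 1 := by
  have h2 : (2:ℝ) ≤ Real.exp 1 := by
    have := Real.add_one_le_exp (1:ℝ)
    linarith
  have h4 : Real.exp 1 < 4 := by
    have := Real.exp_one_lt_d9
    linarith
  have hpos := Real.exp_pos (-1 : ℝ)
  have hmul : Real.exp (-1) * Real.exp 1 = 1 := by
    rw [← Real.exp_add]; norm_num
  refine ⟨hpos, ?_, ?_, hmul⟩
  · nlinarith [Real.exp_pos (1:ℝ)]
  · nlinarith [Real.exp_pos (1:ℝ)]

section phi

variable {θ : ℝ}

noncomputable def dxPhiP (θ : ℝ) : ℝ → ℝ :=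
  fun x => max 0 (min ((x - (Real.exp (-1) - θ)) * (Real.exp 1 / θ))
    (1 / max x (Real.exp (-1))))

noncomputable def dxPhiM (θ : ℝ) : ℝ → ℝ :=
  fun x => max 0 (min ((x - Real.exp (-1)) * (Real.exp 1 / θ))
    (1 / max x (Real.exp (-1) + θ)))

lemma dxPhiP_cont (hθ : 0 < θ) : Continuous (dxPhiP θ) := by
  apply continuous_const.max
  apply Continuous.min
  · fun_prop
  · apply continuous_const.div (continuous_id.max continuous_const)
    intro x
    have := dx_c_facts.1
    exact ne_of_gt (lt_of_lt_of_le this (le_max_right _ _))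

lemma dxPhiM_cont (hθ : 0 < θ) : Continuous (dxPhiM θ) := by
  apply continuous_const.max
  apply Continuous.min
  · fun_prop
  · apply continuous_const.div (continuous_id.max continuous_const)
    intro x
    have h1 := dx_c_facts.1
    exact ne_of_gt (lt_of_lt_of_le (by linarith) (le_max_right _ _))

lemma dxPhiP_nonneg (x : ℝ) : 0 ≤ dxPhiP θ x := le_max_left _ _
lemma dxPhiM_nonneg (x : ℝ) : 0 ≤ dxPhiM θ x := le_max_left _ _

lemma dxPhiP_le_E (hθ : 0 < θ) (x : ℝ) : dxPhiP θ x ≤ Real.exp 1 := by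
  obtain ⟨hc, -, -, hce⟩ := dx_c_facts
  apply max_le
  · positivity
  · apply le_trans (min_le_right _ _)
    rw [div_le_iff₀ (lt_of_lt_of_le hc (le_max_right _ _))]
    have h1 : Real.exp (-1) ≤ max x (Real.exp (-1)) := le_max_right _ _
    nlinarith [Real.exp_pos (1:ℝ)]

lemma dxPhiM_le_E (hθ : 0 < θ) (x : ℝ) : dxPhiM θ x ≤ Real.exp 1 := by
  obtain ⟨hc, -, -, hce⟩ := dx_c_facts
  apply max_le
  · positivity
  · apply le_trans (min_le_right _ _)
    rw [div_le_iff₀ (lt_of_lt_of_le (by linarith) (le_max_right _ _))]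
    have h1 : Real.exp (-1) ≤ max x (Real.exp (-1) + θ) := le_trans (by linarith)
      (le_max_right _ _)
    nlinarith [Real.exp_pos (1:ℝ)]

end phi

section phiint

variable {θ : ℝ}

lemma dxPhiP_integral (hθ : 0 < θ) (hθ8 : θ ≤ 1/8) :
    ∫ x in (0:ℝ)..1, dxPhiP θ x ≤ 1 + Real.exp 1 * θ := by
  obtain ⟨hc, hc34, hc14, hce⟩ := dx_c_facts
  set c := Real.exp (-1) with hcdef
  have hc1 : c - θ ≥ 0 := by linarith
  have hcc : c - θ ≤ c := by linarith
  have hcle1 : c ≤ 1 := by linarith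
  have hint : ∀ a b : ℝ, IntervalIntegrable (dxPhiP θ) MeasureTheory.volume a b :=
    fun a b => (dxPhiP_cont hθ).intervalIntegrable a b
  have split1 : ∫ x in (0:ℝ)..1, dxPhiP θ x
      = (∫ x in (0:ℝ)..(c - θ), dxPhiP θ x) + (∫ x in (c - θ)..c, dxPhiP θ x)
        + ∫ x in c..1, dxPhiP θ x := by
    rw [add_assoc, intervalIntegral.integral_add_adjacent_intervals (hint (c-θ) c) (hint c 1),
      intervalIntegral.integral_add_adjacent_intervals (hint 0 (c-θ)) (hint (c-θ) 1)]
  rw [split1]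
  have p1 : (∫ x in (0:ℝ)..(c - θ), dxPhiP θ x) = 0 := by
    rw [intervalIntegral.integral_congr (g := fun _ => (0:ℝ)), intervalIntegral.integral_zero]
    intro x hx
    rw [Set.uIcc_of_le hc1] at hx
    have hx2 : x - (c - θ) ≤ 0 := by have := hx.2; linarith
    have : min ((x - (c - θ)) * (Real.exp 1 / θ)) (1 / max x c) ≤ 0 := by
      apply le_trans (min_le_left _ _)
      apply mul_nonpos_of_nonpos_of_nonneg hx2 (by positivity)
    simp only [dxPhiP]
    exact max_eq_left this
  have p2 : (∫ x in (c - θ)..c, dxPhiP θ x) ≤ Real.exp 1 * θ := by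
    calc (∫ x in (c - θ)..c, dxPhiP θ x) ≤ ∫ _ in (c - θ)..c, Real.exp 1 := by
          apply intervalIntegral.integral_mono_on hcc (hint _ _)
            (intervalIntegrable_const)
          intro x _
          exact dxPhiP_le_E hθ x
      _ = Real.exp 1 * θ := by rw [intervalIntegral.integral_const, smul_eq_mul]; ring
  have p3 : (∫ x in c..1, dxPhiP θ x) ≤ 1 := by
    have hmono : ∀ x ∈ Set.Icc c 1, dxPhiP θ x ≤ 1 / x := by
      intro x hx
      have hxc : c ≤ x := hx.1
      have hxpos : 0 < x := lt_of_lt_of_le hc hxc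
      simp only [dxPhiP]
      apply max_le
      · positivity
      · apply le_trans (min_le_right _ _)
        rw [max_eq_left hxc]
    have hdiv : IntervalIntegrable (fun x : ℝ => 1 / x) MeasureTheory.volume c 1 := by
      apply ContinuousOn.intervalIntegrable
      apply ContinuousOn.div continuousOn_const continuousOn_id
      intro x hx
      rw [Set.uIcc_of_le hcle1] at hx
      exact ne_of_gt (lt_of_lt_of_le hc hx.1)
    calc (∫ x in c..1, dxPhiP θ x) ≤ ∫ x in c..1, 1 / x := by
          apply intervalIntegral.integral_mono_on hcle1 (hint _ _) hdiv
          exact hmono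
      _ = Real.log (1 / c) := by
          apply integral_one_div
          rw [Set.uIcc_of_le hcle1]
          intro h
          exact absurd h.1 (not_le.mpr hc)
      _ = 1 := by rw [one_div, Real.log_inv, hcdef, Real.log_exp]; norm_num
  linarith

lemma dxPhiM_integral (hθ : 0 < θ) (hθ8 : θ ≤ 1/8) :
    1 - Real.exp 1 * θ ≤ ∫ x in (0:ℝ)..1, dxPhiM θ x := by
  obtain ⟨hc, hc34, hc14, hce⟩ := dx_c_facts
  set c := Real.exp (-1) with hcdef
  have hct1 : c + θ ≤ 1 := by linarith
  have hctpos : 0 < c + θ := by linarith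
  have hint : ∀ a b : ℝ, IntervalIntegrable (dxPhiM θ) MeasureTheory.volume a b :=
    fun a b => (dxPhiM_cont hθ).intervalIntegrable a b
  have split1 : ∫ x in (0:ℝ)..1, dxPhiM θ x
      = (∫ x in (0:ℝ)..(c + θ), dxPhiM θ x) + ∫ x in (c + θ)..1, dxPhiM θ x := by
    rw [intervalIntegral.integral_add_adjacent_intervals (hint 0 (c+θ)) (hint (c+θ) 1)]
  rw [split1]
  have p1 : 0 ≤ ∫ x in (0:ℝ)..(c + θ), dxPhiM θ x := by
    apply intervalIntegral.integral_nonneg (by linarith)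
    intro x _
    exact dxPhiM_nonneg x
  have p2 : (∫ x in (c + θ)..1, dxPhiM θ x) = Real.log (1/(c + θ)) := by
    have heq : ∀ x ∈ Set.uIcc (c + θ) 1, dxPhiM θ x = 1 / x := by
      intro x hx
      rw [Set.uIcc_of_le hct1] at hx
      have hxct : c + θ ≤ x := hx.1
      have hxpos : 0 < x := lt_of_lt_of_le hctpos hxct
      simp only [dxPhiM]
      have hm : max x (c + θ) = x := max_eq_left hxct
      rw [hm]
      have h1 : 1 / x ≤ (x - c) * (Real.exp 1 / θ) := by
        have hxle : 1 / x ≤ 1 / (c + θ) := by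
          apply one_div_le_one_div_of_le hctpos hxct
        have hE : 1 / (c + θ) ≤ Real.exp 1 := by
          rw [div_le_iff₀ hctpos]
          nlinarith [Real.exp_pos (1:ℝ)]
        have h2 : Real.exp 1 ≤ (x - c) * (Real.exp 1 / θ) := by
          rw [← sub_nonneg]
          have : (x - c) * (Real.exp 1 / θ) - Real.exp 1
              = (x - c - θ) * (Real.exp 1 / θ) := by field_simp
          rw [this]
          apply mul_nonneg (by linarith) (by positivity)
        linarith
      rw [min_eq_right h1, max_eq_right (by positivity)]
    rw [intervalIntegral.integral_congr heq]
    apply integral_one_div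
    rw [Set.uIcc_of_le hct1]
    intro h
    exact absurd h.1 (not_le.mpr hctpos)
  rw [p2]
  have p3 : 1 - Real.exp 1 * θ ≤ Real.log (1/(c + θ)) := by
    rw [one_div, Real.log_inv]
    have hsum : c + θ = c * (1 + θ * Real.exp 1) := by
      have : c * (θ * Real.exp 1) = θ := by
        rw [← mul_assoc]; nlinarith [hce]
      nlinarith [this]
    rw [hsum, Real.log_mul (ne_of_gt hc) (by positivity), hcdef, Real.log_exp]
    have : Real.log (1 + θ * Real.exp 1) ≤ θ * Real.exp 1 := by
      have := Real.log_le_sub_one_of_pos (show (0:ℝ) < 1 + θ * Real.exp 1 by positivity)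
      linarith
    linarith
  linarith

end phiint

section sandwich

variable {lam : ℕ → ℝ}

lemma dx_sandwich (hnn : ∀ k, 0 ≤ lam k) {ε θ : ℝ} (hε : 0 < ε) (hθ : 0 < θ) (k : ℕ) :
    lam k ^ (1 + ε) * dxPhiM θ (lam k ^ ε) ≤ (if Real.exp (-(1/ε)) ≤ lam k then lam k else 0)
    ∧ (if Real.exp (-(1/ε)) ≤ lam k then lam k else 0)
      ≤ lam k ^ (1 + ε) * dxPhiP θ (lam k ^ ε) := by
  have hc : (0:ℝ) < Real.exp (-1) := Real.exp_pos _
  have hce : Real.exp (-1) * Real.exp 1 = 1 := by rw [← Real.exp_add]; norm_num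
  have hE : (0:ℝ) < Real.exp 1 := Real.exp_pos _
  rcases eq_or_lt_of_le (hnn k) with h0 | hpos
  · rw [← h0, if_neg (not_le.mpr (Real.exp_pos _)),
      Real.zero_rpow (show (1:ℝ) + ε ≠ 0 by positivity)]
    constructor <;> simp
  · have hxpos : 0 < lam k ^ ε := Real.rpow_pos_of_pos hpos ε
    set x := lam k ^ ε with hxdef
    have hiff : (Real.exp (-(1/ε)) ≤ lam k) ↔ (Real.exp (-1) ≤ x) := by
      rw [← Real.le_log_iff_exp_le hpos, ← Real.le_log_iff_exp_le hxpos,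
        hxdef, Real.log_rpow hpos,
        show (-(1/ε) : ℝ) = (-1)/ε by ring, div_le_iff₀ hε, mul_comm]
    have hlameq : lam k ^ (1 + ε) * (1 / x) = lam k := by
      rw [hxdef, one_div, ← Real.rpow_neg (le_of_lt hpos), ← Real.rpow_add hpos]
      norm_num
    have hrnn : (0:ℝ) ≤ lam k ^ (1 + ε) := Real.rpow_nonneg (hnn k) _
    by_cases hC : Real.exp (-(1/ε)) ≤ lam k
    · have hcx : Real.exp (-1) ≤ x := hiff.mp hC
      rw [if_pos hC]
      have hxinvE : 1 / x ≤ Real.exp 1 := by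
        rw [div_le_iff₀ hxpos]
        nlinarith
      have hPeq : dxPhiP θ x = 1 / x := by
        simp only [dxPhiP]
        rw [max_eq_left hcx]
        have h1 : (1:ℝ) / x ≤ (x - (Real.exp (-1) - θ)) * (Real.exp 1 / θ) := by
          have h2 : Real.exp 1 ≤ (x - (Real.exp (-1) - θ)) * (Real.exp 1 / θ) := by
            rw [← sub_nonneg]
            have : (x - (Real.exp (-1) - θ)) * (Real.exp 1 / θ) - Real.exp 1
                = (x - Real.exp (-1)) * (Real.exp 1 / θ) := by field_simp; ring
            rw [this]
            apply mul_nonneg (by linarith) (by positivity)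
          linarith
        rw [min_eq_right h1, max_eq_right (by positivity)]
      constructor
      · have hMle : dxPhiM θ x ≤ 1 / x := by
          simp only [dxPhiM]
          apply max_le (by positivity)
          apply le_trans (min_le_right _ _)
          apply one_div_le_one_div_of_le hxpos (le_max_left _ _)
        calc lam k ^ (1 + ε) * dxPhiM θ x ≤ lam k ^ (1 + ε) * (1 / x) :=
              mul_le_mul_of_nonneg_left hMle hrnn
          _ = lam k := hlameq
      · rw [hPeq, hlameq]
    · rw [if_neg hC]
      have hcx : x < Real.exp (-1) := not_le.mp (fun h => hC (hiff.mpr h))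
      constructor
      · have hMeq : dxPhiM θ x = 0 := by
          simp only [dxPhiM]
          apply max_eq_left
          apply le_trans (min_le_left _ _)
          apply mul_nonpos_of_nonpos_of_nonneg (by linarith) (by positivity)
        rw [hMeq, mul_zero]
      · have : 0 ≤ dxPhiP θ x := le_max_left _ _
        positivity

end sandwich
section main

variable {lam : ℕ → ℝ} {l : ℝ}

lemma dx_karamata (hnn : ∀ k, 0 ≤ lam k)
    (htrace : ∀ s : ℝ, 1 < s → Summable fun k => lam k ^ s)
    (hl : 0 ≤ l)
    (hcont : ∀ f : ℝ → ℝ, Continuous f →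
      Tendsto (fun ε : ℝ => ε * ∑' k, lam k ^ (1 + ε) * f (lam k ^ ε))
        (nhdsWithin 0 (Set.Ioi 0)) (nhds (l * ∫ x in (0:ℝ)..1, f x))) :
    Tendsto (fun ε : ℝ => ε * ∑' k, (if Real.exp (-(1/ε)) ≤ lam k then lam k else 0))
      (nhdsWithin 0 (Set.Ioi 0)) (nhds l) := by
  have hE : (0:ℝ) < Real.exp 1 := Real.exp_pos _
  rw [Metric.tendsto_nhds]
  intro η hη
  set θ := min ((η/4) / (Real.exp 1 * (l+1))) (1/8) with hθdef
  have hθpos : 0 < θ := by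
    apply lt_min (by positivity) (by norm_num)
  have hθ8 : θ ≤ 1/8 := min_le_right _ _
  have hθb : Real.exp 1 * (l + 1) * θ ≤ η/4 := by
    have h1 : θ ≤ (η/4) / (Real.exp 1 * (l+1)) := min_le_left _ _
    rw [le_div_iff₀ (by positivity)] at h1
    linarith [h1]
  have hlEθ : l * (Real.exp 1 * θ) ≤ η/4 := by nlinarith
  have hIp := dxPhiP_integral hθpos hθ8
  have hIm := dxPhiM_integral hθpos hθ8
  have hp := Metric.tendsto_nhds.mp (hcont (dxPhiP θ) (dxPhiP_cont hθpos)) (η/4)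
    (by positivity)
  have hm := Metric.tendsto_nhds.mp (hcont (dxPhiM θ) (dxPhiM_cont hθpos)) (η/4)
    (by positivity)
  filter_upwards [hp, hm, self_mem_nhdsWithin] with ε hp' hm' hεmem
  have hε : 0 < ε := hεmem
  have hsand := fun k => dx_sandwich hnn hε hθpos (k := k)
  have SP : Summable fun k => lam k ^ (1 + ε) * dxPhiP θ (lam k ^ ε) := by
    refine Summable.of_nonneg_of_le
      (fun k => mul_nonneg (Real.rpow_nonneg (hnn k) _) (dxPhiP_nonneg _)) (fun k => ?_)
      ((htrace (1 + ε) (by linarith)).mul_right (Real.exp 1))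
    exact mul_le_mul_of_nonneg_left (dxPhiP_le_E hθpos _) (Real.rpow_nonneg (hnn k) _)
  have SM : Summable fun k => lam k ^ (1 + ε) * dxPhiM θ (lam k ^ ε) := by
    refine Summable.of_nonneg_of_le
      (fun k => mul_nonneg (Real.rpow_nonneg (hnn k) _) (dxPhiM_nonneg _)) (fun k => ?_)
      ((htrace (1 + ε) (by linarith)).mul_right (Real.exp 1))
    exact mul_le_mul_of_nonneg_left (dxPhiM_le_E hθpos _) (Real.rpow_nonneg (hnn k) _)
  have SW : Summable fun k => (if Real.exp (-(1/ε)) ≤ lam k then lam k else 0) := by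
    refine Summable.of_nonneg_of_le (fun k => ?_) (fun k => (hsand k).2) SP
    split <;> simp [hnn _]
  have hW1 : (∑' k, (if Real.exp (-(1/ε)) ≤ lam k then lam k else 0))
      ≤ ∑' k, lam k ^ (1 + ε) * dxPhiP θ (lam k ^ ε) :=
    Summable.tsum_le_tsum (fun k => (hsand k).2) SW SP
  have hW2 : (∑' k, lam k ^ (1 + ε) * dxPhiM θ (lam k ^ ε))
      ≤ ∑' k, (if Real.exp (-(1/ε)) ≤ lam k then lam k else 0) :=
    Summable.tsum_le_tsum (fun k => (hsand k).1) SM SW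
  rw [Real.dist_eq] at hp' hm' ⊢
  have hup : l * ∫ x in (0:ℝ)..1, dxPhiP θ x ≤ l + η/4 := by
    have := mul_le_mul_of_nonneg_left hIp hl
    nlinarith
  have hlo : l - η/4 ≤ l * ∫ x in (0:ℝ)..1, dxPhiM θ x := by
    have := mul_le_mul_of_nonneg_left hIm hl
    nlinarith
  have habs1 := abs_lt.mp hp'
  have habs2 := abs_lt.mp hm'
  have hmul1 : ε * (∑' k, (if Real.exp (-(1/ε)) ≤ lam k then lam k else 0))
      ≤ ε * ∑' k, lam k ^ (1 + ε) * dxPhiP θ (lam k ^ ε) :=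
    mul_le_mul_of_nonneg_left hW1 (le_of_lt hε)
  have hmul2 : ε * (∑' k, lam k ^ (1 + ε) * dxPhiM θ (lam k ^ ε))
      ≤ ε * ∑' k, (if Real.exp (-(1/ε)) ≤ lam k then lam k else 0) :=
    mul_le_mul_of_nonneg_left hW2 (le_of_lt hε)
  rw [abs_lt]
  constructor <;> [linarith; linarith]

end main
section helpers

variable {lam : ℕ → ℝ}

lemma dx_crude (hnn : ∀ k, 0 ≤ lam k) {ε : ℝ} (hε : 0 < ε) (k : ℕ) :
    (if Real.exp (-(1/ε)) ≤ lam k then lam k else 0) ≤ Real.exp 1 * lam k ^ (1 + ε) := by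
  split_ifs with h
  · have hpos : 0 < lam k := lt_of_lt_of_le (Real.exp_pos _) h
    have hlog : -(1/ε) ≤ Real.log (lam k) := (Real.le_log_iff_exp_le hpos).mpr h
    have h2 : lam k ^ (-ε) ≤ Real.exp 1 := by
      rw [Real.rpow_def_of_pos hpos, Real.exp_le_exp]
      calc Real.log (lam k) * (-ε) ≤ (-(1/ε)) * (-ε) := by
            apply mul_le_mul_of_nonpos_right hlog (by linarith)
        _ = 1 := by field_simp
    calc lam k = lam k ^ (-ε) * lam k ^ (1 + ε) := by
          rw [← Real.rpow_add hpos]; norm_num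
      _ ≤ Real.exp 1 * lam k ^ (1 + ε) :=
          mul_le_mul_of_nonneg_right h2 (Real.rpow_nonneg (le_of_lt hpos) _)
  · exact mul_nonneg (le_of_lt (Real.exp_pos 1)) (Real.rpow_nonneg (hnn k) _)

lemma dx_eps_tendsto {d : ℝ} (hd : 0 < d) :
    Tendsto (fun N : ℕ => (d * Real.log N)⁻¹) atTop (nhdsWithin 0 (Set.Ioi 0)) := by
  have hlog : Tendsto (fun N : ℕ => Real.log N) atTop atTop :=
    Real.tendsto_log_atTop.comp tendsto_natCast_atTop_atTop
  have h1 : Tendsto (fun N : ℕ => d * Real.log N) atTop atTop :=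
    hlog.const_mul_atTop hd
  apply tendsto_nhdsWithin_iff.mpr
  constructor
  · exact h1.inv_tendsto_atTop
  · filter_upwards [h1.eventually_gt_atTop 0] with N hN
    exact Set.mem_Ioi.mpr (by positivity)

lemma dx_exp_eq {d : ℝ} {N : ℕ} (hN : 0 < Real.log N) (hd : 0 < d) :
    Real.exp (-(1/((d * Real.log N)⁻¹))) = (N : ℝ) ^ (-d) := by
  have hNpos : (0:ℝ) < N := by
    rcases Nat.eq_zero_or_pos N with h | h
    · rw [h] at hN; simp at hN
    · exact_mod_cast h
  rw [one_div, inv_inv, Real.rpow_def_of_pos hNpos]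
  congr 1
  ring

end helpers
set_option maxHeartbeats 2000000 in
/-- If `T ≥ 0` is a compact operator on a Hilbert space, diagonalized by a Hilbert basis
with non-increasing nonnegative eigenvalue sequence `lam`, such that `T^s` is trace class
for all `s > 1` (i.e. `∑ lam k ^ s < ∞`), and `l = lim_{ε→0⁺} ε Tr(T^{1+ε})` exists, then
`T` is Dixmier traceable with `(log N)⁻¹ ∑_{k<N} lam k → l`. -/
theorem dixmier_traceable_of_limit
    {H : Type*} [NormedAddCommGroup H] [InnerProductSpace ℂ H] [CompleteSpace H]
    (T : H →L[ℂ] H) (hT : T.IsPositive) (hcpt : IsCompactOperator T)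
    (e : HilbertBasis ℕ ℂ H) (lam : ℕ → ℝ)
    (heig : ∀ k, T (e k) = (lam k : ℂ) • e k)
    (hanti : Antitone lam) (hnn : ∀ k, 0 ≤ lam k)
    (htrace : ∀ s : ℝ, 1 < s → Summable fun k => lam k ^ s)
    (l : ℝ)
    (hlim : Tendsto (fun ε : ℝ => ε * ∑' k, lam k ^ (1 + ε))
      (nhdsWithin 0 (Set.Ioi 0)) (nhds l)) :
    Tendsto (fun N : ℕ => (∑ k ∈ Finset.range N, lam k) / Real.log N) atTop (nhds l) := by
  clear hT hcpt heig T e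
  -- l is nonnegative
  have hl : 0 ≤ l := by
    refine ge_of_tendsto hlim ?_
    filter_upwards [self_mem_nhdsWithin] with ε (hε : 0 < ε)
    exact mul_nonneg (le_of_lt hε) (tsum_nonneg fun k => Real.rpow_nonneg (hnn k) _)
  -- eventual bound on the zeta-like function
  have hPhi : ∀ᶠ ε in nhdsWithin (0:ℝ) (Set.Ioi 0), ε * ∑' k, lam k ^ (1 + ε) ≤ l + 1 :=
    (hlim.eventually_lt_const (by linarith : l < l + 1)).mono fun ε h => le_of_lt h
  -- the Karamata limit
  have KA : Tendsto (fun ε : ℝ => ε * ∑' k, (if Real.exp (-(1/ε)) ≤ lam k then lam k else 0))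
      (nhdsWithin 0 (Set.Ioi 0)) (nhds l) := by
    apply dx_karamata hnn htrace hl
    intro f hf
    apply dx_cont hanti hnn htrace hl hPhi _ f hf
    intro p
    apply dx_poly hnn htrace (fun {ε} hε k i => dx_rw hnn hε k i) _ p
    intro m
    exact dx_mono hnn hlim m (fun c hc => dx_scale lam l hlim c hc)
  -- summability of truncated sums
  have SW : ∀ {ε : ℝ}, 0 < ε →
      Summable (fun k => if Real.exp (-(1/ε)) ≤ lam k then lam k else 0) := by
    intro ε hε
    refine Summable.of_nonneg_of_le (fun k => ?_) (dx_crude hnn hε)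
      ((htrace (1 + ε) (by linarith)).mul_left _)
    split <;> simp [hnn _]
  have hitenn : ∀ {ε : ℝ} (k : ℕ), 0 ≤ (if Real.exp (-(1/ε)) ≤ lam k then lam k else 0) := by
    intro ε k; split <;> simp [hnn _]
  have hlogT : Tendsto (fun N : ℕ => Real.log N) atTop atTop :=
    Real.tendsto_log_atTop.comp tendsto_natCast_atTop_atTop
  rw [tendsto_order]
  constructor
  · -- lower bound
    intro a ha
    rcases lt_or_ge a 0 with haneg | hanneg
    · filter_upwards [hlogT.eventually_gt_atTop 0] with N hN3
      calc a < 0 := haneg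
        _ ≤ (∑ k ∈ Finset.range N, lam k) / Real.log N :=
          div_nonneg (Finset.sum_nonneg fun k _ => hnn k) (le_of_lt hN3)
    · set η := min (l - a) 1 / 2 with hηdef
      have hηpos : 0 < η := by
        apply div_pos (lt_min (by linarith) one_pos) two_pos
      have hη1 : η ≤ 1/2 := by
        have : min (l - a) 1 ≤ 1 := min_le_right _ _
        rw [hηdef]; linarith
      have hal : a ≤ l - 2 * η := by
        rcases le_or_gt (l - a) 1 with h | h
        · rw [hηdef, min_eq_left h]; linarith
        · rw [hηdef, min_eq_right (le_of_lt h)]; linarith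
      set δ := min (η / (l + 1)) (1/2) with hδdef
      have hδpos : 0 < δ := lt_min (by positivity) (by norm_num)
      have hδ12 : δ ≤ 1/2 := min_le_right _ _
      have hδb : δ * (l + 1) ≤ η := by
        have h1 : δ ≤ η / (l + 1) := min_le_left _ _
        rw [le_div_iff₀ (by linarith : (0:ℝ) < l + 1)] at h1
        linarith
      have h1δ : (0:ℝ) < 1 - δ := by linarith
      have hcomp := KA.comp (dx_eps_tendsto h1δ)
      have hev1 := Metric.tendsto_nhds.mp hcomp (η/2) (by positivity)
      have hδ2 : (0:ℝ) < δ/2 := by linarith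
      have hpow : Tendsto (fun N : ℕ => (N:ℝ) ^ (δ/2)) atTop atTop :=
        (tendsto_rpow_atTop hδ2).comp tendsto_natCast_atTop_atTop
      filter_upwards [hev1, hlogT.eventually_gt_atTop 0, eventually_ge_atTop 1,
        hpow.eventually_gt_atTop ((l+1) * (2/δ))] with N hN1 hN3 hN4 hN5
      set L := Real.log N with hLdef
      set ε := ((1 - δ) * L)⁻¹ with hεdef
      have hεpos : 0 < ε := by rw [hεdef]; positivity
      have hNR : (1:ℝ) ≤ (N:ℝ) := by exact_mod_cast hN4
      have hNpos : (0:ℝ) < (N:ℝ) := by linarith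
      have hexp : Real.exp (-(1/ε)) = (N:ℝ) ^ (-(1-δ)) := dx_exp_eq hN3 h1δ
      rw [Real.dist_eq] at hN1
      have habs := abs_lt.mp hN1
      have h3 : (0:ℝ) < (1 - δ) * L := by positivity
      -- lower and upper bounds on W
      have hWlb : (l - η/2) * ((1 - δ) * L)
          ≤ (∑' k, (if Real.exp (-(1/ε)) ≤ lam k then lam k else 0)) := by
        have h2 : l - η/2 ≤ ε * (∑' k, (if Real.exp (-(1/ε)) ≤ lam k then lam k else 0)) := by
          have := habs.1
          simp only [Function.comp] at this
          rw [hεdef]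
          linarith [this]
        calc (l - η/2) * ((1 - δ) * L) ≤ (ε * (∑' k, (if Real.exp (-(1/ε)) ≤ lam k
            then lam k else 0))) * ((1 - δ) * L) :=
              mul_le_mul_of_nonneg_right h2 (le_of_lt h3)
          _ = (∑' k, (if Real.exp (-(1/ε)) ≤ lam k then lam k else 0)) := by
              rw [hεdef]; field_simp
      have hWub : (∑' k, (if Real.exp (-(1/ε)) ≤ lam k then lam k else 0))
          ≤ (l + 1) * L := by
        have h2 : ε * (∑' k, (if Real.exp (-(1/ε)) ≤ lam k then lam k else 0)) < l + η/2 := by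
          have := habs.2
          simp only [Function.comp] at this
          rw [hεdef]
          linarith [this]
        have step1 : (∑' k, (if Real.exp (-(1/ε)) ≤ lam k then lam k else 0))
            ≤ (l + η/2) * ((1 - δ) * L) := by
          calc (∑' k, (if Real.exp (-(1/ε)) ≤ lam k then lam k else 0))
              = ((1 - δ) * L) * (ε * (∑' k, (if Real.exp (-(1/ε)) ≤ lam k then lam k else 0)))
                := by rw [hεdef]; field_simp
            _ ≤ ((1 - δ) * L) * (l + η/2) :=
                mul_le_mul_of_nonneg_left (le_of_lt h2) (le_of_lt h3)
            _ = (l + η/2) * ((1 - δ) * L) := by ring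
        have step2 : (l + η/2) * ((1 - δ) * L) ≤ (l + 1) * L := by
          have hq : (l + η/2) * (1 - δ) ≤ l + 1 := by nlinarith
          calc (l + η/2) * ((1 - δ) * L) = ((l + η/2) * (1 - δ)) * L := by ring
            _ ≤ (l + 1) * L := mul_le_mul_of_nonneg_right hq (le_of_lt hN3)
        linarith
      -- L bound versus N^δ
      have hF2 : (l + 1) * L < (N:ℝ) ^ (δ:ℝ) := by
        have hlog2 : L ≤ (N:ℝ) ^ (δ/2) / (δ/2) := by
          rw [hLdef]
          exact Real.log_natCast_le_rpow_div N hδ2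
        have hNd2pos : (0:ℝ) < (N:ℝ) ^ (δ/2) := Real.rpow_pos_of_pos hNpos _
        have hsplit : (N:ℝ) ^ (δ:ℝ) = (N:ℝ) ^ (δ/2) * (N:ℝ) ^ (δ/2) := by
          rw [← Real.rpow_add hNpos]; norm_num
        have hc1 : (l + 1) * L ≤ ((l+1) * (2/δ)) * (N:ℝ) ^ (δ/2) := by
          calc (l + 1) * L ≤ (l + 1) * ((N:ℝ) ^ (δ/2) / (δ/2)) :=
                mul_le_mul_of_nonneg_left hlog2 (by linarith)
            _ = ((l+1) * (2/δ)) * (N:ℝ) ^ (δ/2) := by field_simp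
        calc (l + 1) * L ≤ ((l+1) * (2/δ)) * (N:ℝ) ^ (δ/2) := hc1
          _ < (N:ℝ) ^ (δ/2) * (N:ℝ) ^ (δ/2) := mul_lt_mul_of_pos_right hN5 hNd2pos
          _ = (N:ℝ) ^ (δ:ℝ) := hsplit.symm
      -- support of the truncated sum is inside range N
      have hsupp : ∀ k, k ∉ Finset.range N →
          (if Real.exp (-(1/ε)) ≤ lam k then lam k else 0) = 0 := by
        intro k hk
        rw [Finset.mem_range, not_lt] at hk
        rw [if_neg]
        intro hcon
        have hsum : ((k:ℝ) + 1) * Real.exp (-(1/ε))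
            ≤ (∑' j, (if Real.exp (-(1/ε)) ≤ lam j then lam j else 0)) := by
          have h1 : ∀ j ∈ Finset.range (k+1),
              Real.exp (-(1/ε)) ≤ (if Real.exp (-(1/ε)) ≤ lam j then lam j else 0) := by
            intro j hj
            rw [Finset.mem_range, Nat.lt_succ_iff] at hj
            have : Real.exp (-(1/ε)) ≤ lam j := le_trans hcon (hanti hj)
            rw [if_pos this]
            exact this
          calc ((k:ℝ) + 1) * Real.exp (-(1/ε))
              = ∑ _j ∈ Finset.range (k+1), Real.exp (-(1/ε)) := by
                rw [Finset.sum_const, Finset.card_range, nsmul_eq_mul]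
                push_cast
                ring
            _ ≤ ∑ j ∈ Finset.range (k+1),
                (if Real.exp (-(1/ε)) ≤ lam j then lam j else 0) :=
                Finset.sum_le_sum h1
            _ ≤ (∑' j, (if Real.exp (-(1/ε)) ≤ lam j then lam j else 0)) :=
                Summable.sum_le_tsum _ (fun j _ => hitenn j) (SW hεpos)
        have hNk : (N:ℝ) ≤ (k:ℝ) + 1 := by
          have : (N:ℝ) ≤ (k:ℝ) := by exact_mod_cast hk
          linarith
        have hNdel : (N:ℝ) ^ (δ:ℝ) ≤ ((k:ℝ) + 1) * Real.exp (-(1/ε)) := by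
          rw [hexp]
          have hid : (N:ℝ) * (N:ℝ) ^ (-(1-δ)) = (N:ℝ) ^ (δ:ℝ) := by
            nth_rewrite 1 [show ((N:ℝ)) = (N:ℝ) ^ (1:ℝ) from (Real.rpow_one _).symm]
            rw [← Real.rpow_add hNpos]
            norm_num
          rw [← hid]
          apply mul_le_mul_of_nonneg_right hNk
            (le_of_lt (Real.rpow_pos_of_pos hNpos _))
        linarith
      have hWS : (∑' k, (if Real.exp (-(1/ε)) ≤ lam k then lam k else 0))
          ≤ ∑ k ∈ Finset.range N, lam k := by
        rw [tsum_eq_sum hsupp]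
        apply Finset.sum_le_sum
        intro k _
        split_ifs
        · exact le_refl _
        · exact hnn k
      -- combine
      rw [lt_div_iff₀ hN3]
      have hq2 : (l - 3*η/2) * L ≤ (l - η/2) * ((1 - δ) * L) := by
        have hq : l - 3*η/2 ≤ (l - η/2) * (1 - δ) := by nlinarith
        calc (l - 3*η/2) * L ≤ ((l - η/2) * (1 - δ)) * L :=
            mul_le_mul_of_nonneg_right hq (le_of_lt hN3)
          _ = (l - η/2) * ((1 - δ) * L) := by ring
      have ha2 : a * L ≤ (l - 2*η) * L := mul_le_mul_of_nonneg_right hal (le_of_lt hN3)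
      have ha3 : (l - 2*η) * L < (l - 3*η/2) * L := by
        apply mul_lt_mul_of_pos_right (by linarith) hN3
      linarith
  · -- upper bound
    intro b hb
    set η := min (b - l) 1 / 2 with hηdef
    have hηpos : 0 < η := by
      apply div_pos (lt_min (by linarith) one_pos) two_pos
    have hη1 : η ≤ 1/2 := by
      have : min (b - l) 1 ≤ 1 := min_le_right _ _
      rw [hηdef]
      linarith
    have hbl : l + 2 * η ≤ b := by
      rcases le_or_gt (b - l) 1 with h | h
      · rw [hηdef, min_eq_left h]; linarith
      · rw [hηdef, min_eq_right (le_of_lt h)]; linarith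
    set δ := η / (2 * (l + 1)) with hδdef
    have hδpos : 0 < δ := by positivity
    have hδb : δ * (l + 1) ≤ η / 2 := by
      rw [hδdef]; rw [div_mul_eq_mul_div, le_div_iff₀ (by norm_num : (0:ℝ) < 2)]
      have h2l : (0:ℝ) < 2 * (l+1) := by linarith
      rw [div_mul_eq_mul_div, div_mul_eq_mul_div, div_le_div_iff₀ h2l (by norm_num)]
      ring_nf
      nlinarith
    -- composed tendsto
    have hcomp := KA.comp (dx_eps_tendsto (show (0:ℝ) < 1 + δ by linarith))
    have hev1 := Metric.tendsto_nhds.mp hcomp (η/2) (by positivity)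
    have hlogT : Tendsto (fun N : ℕ => Real.log N) atTop atTop :=
      Real.tendsto_log_atTop.comp tendsto_natCast_atTop_atTop
    filter_upwards [hev1, hlogT.eventually_gt_atTop (1/η), hlogT.eventually_gt_atTop 0,
      eventually_ge_atTop 1] with N hN1 hN2 hN3 hN4
    set L := Real.log N with hLdef
    set ε := ((1 + δ) * L)⁻¹ with hεdef
    have hεpos : 0 < ε := by
      rw [hεdef]; positivity
    have hexp : Real.exp (-(1/ε)) = (N:ℝ) ^ (-(1+δ)) := dx_exp_eq hN3 (by linarith)
    -- W bound from the limit
    rw [Real.dist_eq] at hN1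
    have habs := abs_lt.mp hN1
    have hWub : (∑' k, (if Real.exp (-(1/ε)) ≤ lam k then lam k else 0))
        ≤ (l + η/2) * ((1 + δ) * L) := by
      have h2 : ε * (∑' k, (if Real.exp (-(1/ε)) ≤ lam k then lam k else 0)) < l + η/2 := by
        have := habs.2
        simp only [Function.comp] at this
        linarith [this]
      have h3 : (0:ℝ) < (1 + δ) * L := by positivity
      rw [hεdef] at h2
      calc (∑' k, (if Real.exp (-(1/ε)) ≤ lam k then lam k else 0))
          = ((1 + δ) * L) * (((1 + δ) * L)⁻¹ *
            (∑' k, (if Real.exp (-(1/ε)) ≤ lam k then lam k else 0))) := by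
            field_simp
        _ ≤ ((1 + δ) * L) * (l + η/2) := by
            apply mul_le_mul_of_nonneg_left _ (le_of_lt h3)
            rw [hεdef]
            exact le_of_lt h2
        _ = (l + η/2) * ((1 + δ) * L) := by ring
    -- S N ≤ W + 1
    have hSle : (∑ k ∈ Finset.range N, lam k)
        ≤ (∑' k, (if Real.exp (-(1/ε)) ≤ lam k then lam k else 0)) + 1 := by
      have hterm : ∀ k, lam k ≤ (if Real.exp (-(1/ε)) ≤ lam k then lam k else 0)
          + Real.exp (-(1/ε)) := by
        intro k
        split_ifs with h
        · linarith [Real.exp_pos (-(1/ε))]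
        · push_neg at h
          linarith [le_of_lt h]
      calc (∑ k ∈ Finset.range N, lam k)
          ≤ ∑ k ∈ Finset.range N, ((if Real.exp (-(1/ε)) ≤ lam k then lam k else 0)
            + Real.exp (-(1/ε))) := Finset.sum_le_sum fun k _ => hterm k
        _ = (∑ k ∈ Finset.range N, (if Real.exp (-(1/ε)) ≤ lam k then lam k else 0))
            + N * Real.exp (-(1/ε)) := by
            rw [Finset.sum_add_distrib, Finset.sum_const, Finset.card_range, nsmul_eq_mul]
        _ ≤ (∑' k, (if Real.exp (-(1/ε)) ≤ lam k then lam k else 0)) + 1 := by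
            gcongr
            · exact Summable.sum_le_tsum _ (fun k _ => hitenn k) (SW hεpos)
            · rw [hexp]
              have : (N:ℝ) * (N:ℝ) ^ (-(1+δ)) = (N:ℝ) ^ (-δ) := by
                nth_rewrite 1 [show ((N:ℝ)) = (N:ℝ) ^ (1:ℝ) from (Real.rpow_one _).symm]
                rw [← Real.rpow_add (by positivity : (0:ℝ) < (N:ℝ))]
                norm_num
              rw [this]
              apply Real.rpow_le_one_of_one_le_of_nonpos
              · exact_mod_cast hN4
              · linarith
    -- combine
    rw [div_lt_iff₀ hN3]
    have hfinal : (l + η/2) * ((1 + δ) * L) + 1 < b * L := by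
      have hexpand : (l + η/2) * ((1 + δ) * L) = ((l + η/2) + δ * (l + η/2)) * L := by ring
      have hδsmall : δ * (l + η/2) ≤ η/2 := by
        have : δ * (l + η/2) ≤ δ * (l + 1) := by
          apply mul_le_mul_of_nonneg_left (by linarith) (le_of_lt hδpos)
        linarith
      have h1L : 1 < η * L := by
        have := (div_lt_iff₀ hηpos).mp hN2
        linarith
      have hstep : (l + η/2 + δ*(l + η/2)) * L ≤ (l + η) * L :=
        mul_le_mul_of_nonneg_right (by linarith) (le_of_lt hN3)
      have hstep2 : (l + 2*η) * L ≤ b * L :=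
        mul_le_mul_of_nonneg_right hbl (le_of_lt hN3)
      have hstep3 : (l+η)*L + η*L = (l+2*η)*L := by ring
      linarith
    calc (∑ k ∈ Finset.range N, lam k)
        ≤ (∑' k, (if Real.exp (-(1/ε)) ≤ lam k then lam k else 0)) + 1 := hSle
      _ ≤ (l + η/2) * ((1 + δ) * L) + 1 := by linarith
      _ < b * L := hfinal
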